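/- Let a_1 a_2 ⋯ a_n and b_1 b_2 ⋯ b_m be strings of symbols over an alphabet Σ and suppose 0 ≤ ε ≤ 1. If f̄(a_1 a_2 ⋯ a_n, b_1 b_2 ⋯ b_m) = 1 − ε, then f̃(a_1 a_2 ⋯ a_n, b_1 b_2 ⋯ b_m) ≥ 1 − 3ε. -/

import Mathlib

open MeasureTheory

namespace Paper

variable {σ : Type*}

/-- The concatenation of `t` copies of the string `w`. -/
def rep (w : List σ) (t : ℕ) : List σ := (List.replicate t w).flatten

/-- `I` is a match between the strings `a` and `b` (with 0-based indices):
a collection of pairs of indices, strictly increasing in both coordinates,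
pairing equal symbols. -/
def IsMatch (a b : List σ) (I : List (ℕ × ℕ)) : Prop :=
  I.Chain' (fun p q => p.1 < q.1 ∧ p.2 < q.2) ∧
  ∀ p ∈ I, p.1 < a.length ∧ p.2 < b.length ∧ a[p.1]? = b[p.2]?

/-- The largest cardinality of a match between `a` and `b`. -/
noncomputable def maxMatch (a b : List σ) : ℕ :=
  sSup {r | ∃ I, IsMatch a b I ∧ I.length = r}

/-- The `f̄` distance between two strings. -/
noncomputable def fbar (a b : List σ) : ℝ :=
  1 - 2 * (maxMatch a b : ℝ) / (a.length + b.length)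

/-- `I` is an approximate match between the strings `a` and `b` (0-based indices):
pairs of indices, nondecreasing in each coordinate and strictly increasing as pairs,
pairing equal symbols, such that the set of indices paired with any given index is
contained in a set of three consecutive indices. -/
def IsApproxMatch (a b : List σ) (I : List (ℕ × ℕ)) : Prop :=
  I.Chain' (fun p q => p.1 ≤ q.1 ∧ p.2 ≤ q.2 ∧ p ≠ q) ∧
  (∀ p ∈ I, p.1 < a.length ∧ p.2 < b.length ∧ a[p.1]? = b[p.2]?) ∧
  (∀ p ∈ I, (∃ s, ∀ q ∈ I, q.1 = p.1 → q.2 ∈ ({s, s+1, s+2} : Set ℕ)) ∧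
            (∃ t, ∀ q ∈ I, q.2 = p.2 → q.1 ∈ ({t, t+1, t+2} : Set ℕ)))

/-- The largest cardinality of an approximate match between `a` and `b`. -/
noncomputable def maxApproxMatch (a b : List σ) : ℕ :=
  sSup {r | ∃ I, IsApproxMatch a b I ∧ I.length = r}

/-- The approximate distance `f̃` between two strings. -/
noncomputable def ftilde (a b : List σ) : ℝ :=
  max 0 (1 - 2 * (maxApproxMatch a b : ℝ) / (a.length + b.length))

end Paper

open Paper List

section AuxStatement10

/-- Every third element of a list. -/
private def everyThird {α : Type*} : List α → List α
  | [] => []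
  | x :: xs => x :: everyThird (xs.drop 2)
termination_by l => l.length
decreasing_by simp [List.length_drop]

private lemma everyThird_sublist {α : Type*} : ∀ l : List α, (everyThird l).Sublist l := by
  intro l
  induction l using everyThird.induct with
  | case1 => simp [everyThird]
  | case2 x xs ih =>
    rw [everyThird]
    exact List.Sublist.cons₂ x (ih.trans (List.drop_sublist 2 xs))

private lemma everyThird_length {α : Type*} : ∀ l : List α, l.length ≤ 3 * (everyThird l).length := by
  intro l
  induction l using everyThird.induct with
  | case1 => simp [everyThird]
  | case2 x xs ih =>
    rw [everyThird]
    simp only [List.length_cons, List.length_drop] at *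
    omega

private instance : IsTrans (ℕ × ℕ) (fun p q => p.1 ≤ q.1 ∧ p.2 ≤ q.2 ∧ p ≠ q) := by
  constructor
  rintro ⟨p1, p2⟩ ⟨q1, q2⟩ ⟨r1, r2⟩ h h'
  simp only [ne_eq, Prod.mk.injEq, not_and] at *
  omega

private lemma approx_sublist {σ : Type*} {a b : List σ} {I J : List (ℕ × ℕ)}
    (hJ : J.Sublist I) (hI : IsApproxMatch a b I) : IsApproxMatch a b J := by
  obtain ⟨h1, h2, h3⟩ := hI
  refine ⟨?_, fun p hp => h2 p (hJ.subset hp), fun p hp => ?_⟩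
  · simp only [List.Chain', List.isChain_iff_pairwise] at h1 ⊢
    exact h1.sublist hJ
  · obtain ⟨⟨s, hs⟩, ⟨t, ht⟩⟩ := h3 p (hJ.subset hp)
    exact ⟨⟨s, fun q hq => hs q (hJ.subset hq)⟩, ⟨t, fun q hq => ht q (hJ.subset hq)⟩⟩

private lemma strict_step {σ : Type*} {a b : List σ} {p : ℕ × ℕ} {xs : List (ℕ × ℕ)}
    (hI : IsApproxMatch a b (p :: xs)) {q : ℕ × ℕ} (hq : q ∈ xs.drop 2) :
    p.1 < q.1 ∧ p.2 < q.2 := by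
  obtain ⟨h1, _, h3⟩ := hI
  rcases xs with _ | ⟨y0, _ | ⟨y1, ys⟩⟩
  · simp at hq
  · simp at hq
  · simp only [List.drop_succ_cons, List.drop_zero] at hq
    simp only [List.Chain', List.isChain_iff_pairwise] at h1
    rcases List.pairwise_cons.mp h1 with ⟨hp, h1'⟩
    rcases List.pairwise_cons.mp h1' with ⟨hy0, h1''⟩
    rcases List.pairwise_cons.mp h1'' with ⟨hy1, -⟩
    have Rpy0 := hp y0 (by simp)
    have Ry01 := hy0 y1 (by simp)
    have Ry1q := hy1 q hq
    have Rpq := hp q (by simp [hq])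
    obtain ⟨⟨s, hs⟩, ⟨t, ht⟩⟩ := h3 p (by simp)
    have ms0 := hs p (by simp) rfl
    have ms1 := hs y0 (by simp)
    have ms2 := hs y1 (by simp)
    have ms3 := hs q (by simp [hq])
    have mt0 := ht p (by simp) rfl
    have mt1 := ht y0 (by simp)
    have mt2 := ht y1 (by simp)
    have mt3 := ht q (by simp [hq])
    obtain ⟨p1, p2⟩ := p
    obtain ⟨q1, q2⟩ := q
    obtain ⟨a1, a2⟩ := y0
    obtain ⟨b1, b2⟩ := y1
    simp only [Set.mem_insert_iff, Set.mem_singleton_iff, ne_eq, Prod.mk.injEq,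
      not_and] at Rpy0 Ry01 Ry1q Rpq ms0 ms1 ms2 ms3 mt0 mt1 mt2 mt3 ⊢
    omega

private lemma approx_to_match {σ : Type*} {a b : List σ} :
    ∀ I : List (ℕ × ℕ), IsApproxMatch a b I → IsMatch a b (everyThird I) := by
  intro I
  induction I using everyThird.induct with
  | case1 => intro _; exact ⟨by simp [everyThird, List.Chain'], by simp [everyThird]⟩
  | case2 x xs ih =>
    intro hI
    have hsub : (xs.drop 2).Sublist (x :: xs) :=
      (List.drop_sublist 2 xs).trans (List.sublist_cons_self x xs)
    obtain ⟨hc, hm⟩ := ih (approx_sublist hsub hI)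
    rw [everyThird]
    refine ⟨List.isChain_cons.mpr ⟨?_, hc⟩, ?_⟩
    · intro y hy
      have hymem : y ∈ xs.drop 2 :=
        (everyThird_sublist _).subset (List.mem_of_mem_head? hy)
      exact strict_step hI hymem
    · intro p hp
      rcases List.mem_cons.mp hp with rfl | hp'
      · exact hI.2.1 p (by simp)
      · exact hm p hp'

private lemma approx_length_le {σ : Type*} {a b : List σ} {I : List (ℕ × ℕ)}
    (hI : IsApproxMatch a b I) : I.length ≤ a.length * b.length := by
  classical
  have hnd : I.Nodup := by
    have h1 := (List.isChain_iff_pairwise.mp hI.1)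
    exact h1.imp (fun h => h.2.2)
  have hsub : I.toFinset ⊆ Finset.range a.length ×ˢ Finset.range b.length := by
    intro p hp
    rw [List.mem_toFinset] at hp
    obtain ⟨h1, h2, -⟩ := hI.2.1 p hp
    simp only [Finset.mem_product, Finset.mem_range]
    exact ⟨h1, h2⟩
  calc I.length = I.toFinset.card := (List.toFinset_card_of_nodup hnd).symm
    _ ≤ (Finset.range a.length ×ˢ Finset.range b.length).card := Finset.card_le_card hsub
    _ = a.length * b.length := by simp [Finset.card_product]

private lemma match_length_le {σ : Type*} {a b : List σ} {I : List (ℕ × ℕ)}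
    (hI : IsMatch a b I) : I.length ≤ a.length * b.length := by
  classical
  haveI : IsTrans (ℕ × ℕ) (fun p q : ℕ × ℕ => p.1 < q.1 ∧ p.2 < q.2) := by
    constructor
    rintro p q r ⟨h1, h2⟩ ⟨h3, h4⟩
    exact ⟨h1.trans h3, h2.trans h4⟩
  have hnd : I.Nodup := by
    have h1 := (List.isChain_iff_pairwise.mp hI.1)
    refine h1.imp ?_
    rintro p q ⟨h, -⟩ rfl
    exact lt_irrefl _ h
  have hsub : I.toFinset ⊆ Finset.range a.length ×ˢ Finset.range b.length := by
    intro p hp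
    rw [List.mem_toFinset] at hp
    obtain ⟨h1, h2, -⟩ := hI.2 p hp
    simp only [Finset.mem_product, Finset.mem_range]
    exact ⟨h1, h2⟩
  calc I.length = I.toFinset.card := (List.toFinset_card_of_nodup hnd).symm
    _ ≤ (Finset.range a.length ×ˢ Finset.range b.length).card := Finset.card_le_card hsub
    _ = a.length * b.length := by simp [Finset.card_product]

private lemma maxApprox_le {σ : Type*} (a b : List σ) :
    maxApproxMatch a b ≤ 3 * maxMatch a b := by
  have hAne : {r | ∃ I, IsApproxMatch a b I ∧ I.length = r}.Nonempty :=
    ⟨0, [], ⟨List.isChain_nil, by simp, by simp⟩, rfl⟩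
  have hAbdd : BddAbove {r | ∃ I, IsApproxMatch a b I ∧ I.length = r} := by
    refine ⟨a.length * b.length, ?_⟩
    rintro r ⟨I, hI, rfl⟩
    exact approx_length_le hI
  have hMbdd : BddAbove {r | ∃ I, IsMatch a b I ∧ I.length = r} := by
    refine ⟨a.length * b.length, ?_⟩
    rintro r ⟨I, hI, rfl⟩
    exact match_length_le hI
  obtain ⟨I, hI, hlen⟩ := Nat.sSup_mem hAne hAbdd
  have hle : (everyThird I).length ≤ maxMatch a b :=
    le_csSup hMbdd ⟨everyThird I, approx_to_match I hI, rfl⟩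
  calc maxApproxMatch a b = I.length := hlen.symm
    _ ≤ 3 * (everyThird I).length := everyThird_length I
    _ ≤ 3 * maxMatch a b := by omega

end AuxStatement10

/-- If `f̄(a,b) = 1 − ε` with `0 ≤ ε ≤ 1`, then `f̃(a,b) ≥ 1 − 3ε`. -/
theorem statement10 {σ : Type*} (a b : List σ) (ε : ℝ) (h0 : 0 ≤ ε) (h1 : ε ≤ 1)
    (h : fbar a b = 1 - ε) :
    1 - 3 * ε ≤ ftilde a b := by
  by_cases hnm : (a.length : ℝ) + (b.length : ℝ) = 0
  · have hf : fbar a b = 1 := by simp [fbar, hnm]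
    have hε : ε = 0 := by rw [hf] at h; linarith
    have hft : ftilde a b = 1 := by simp [ftilde, hnm]
    rw [hft, hε]; norm_num
  · have hpos : (0 : ℝ) < (a.length : ℝ) + (b.length : ℝ) :=
      lt_of_le_of_ne (by positivity) (Ne.symm hnm)
    unfold fbar at h
    have hεc : ε * ((a.length : ℝ) + (b.length : ℝ)) = 2 * (maxMatch a b : ℝ) := by
      have hε : ε = 2 * (maxMatch a b : ℝ) / ((a.length : ℝ) + (b.length : ℝ)) := by
        linarith
      rw [hε, div_mul_cancel₀]
      exact hnm
    have hkey : (maxApproxMatch a b : ℝ) ≤ 3 * (maxMatch a b : ℝ) := by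
      exact_mod_cast maxApprox_le a b
    refine le_max_of_le_right ?_
    rw [sub_le_sub_iff_left, div_le_iff₀ hpos]
    nlinarith [hεc, hkey]
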